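/- Suppose 𝒮^inv and 𝒮^res are orthogonal linear subspaces of ℝ^p with 𝒮^inv ⊕ 𝒮^res = ℝ^p such that for all t ∈ ℕ, Π_{𝒮^inv} Σ_t Π_{𝒮^res} = 0, and such that 𝒮^inv is opt-invariant on ℕ (the unique maximizer of β ↦ ΔVar_t(β) over 𝒮^inv is the same for all t ∈ ℕ). Then for every t ∈ ℕ, γ_t equals the sum of the unique maximizer of β ↦ (1/n)∑_{s=1}^n ΔVar_s(β) over 𝒮^inv and the unique maximizer of β ↦ ΔVar_t(β) over 𝒮^res. -/

import Mathlib

open Matrix Finset MeasureTheory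

noncomputable section

/-- Vectors in `ℝ^p`. -/
abbrev Vec (p : ℕ) : Type := Fin p → ℝ

/-- Real `p × p` matrices. -/
abbrev Mat (p : ℕ) : Type := Matrix (Fin p) (Fin p) ℝ

/-- Explained variance `ΔVar(β) = 2 γᵀ C β − βᵀ C β` at a time with covariance `C`
and true parameter `γ`. -/
def dVar {p : ℕ} (C : Mat p) (γ β : Vec p) : ℝ :=
  2 * (γ ⬝ᵥ (C *ᵥ β)) - β ⬝ᵥ (C *ᵥ β)

/-- `β₀` is the unique maximizer of `f` over the linear subspace whose orthogonal
projection matrix is `P` (membership in the subspace is expressed as `P *ᵥ β = β`). -/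
def IsUMaxOn {p : ℕ} (f : Vec p → ℝ) (P : Mat p) (β₀ : Vec p) : Prop :=
  P *ᵥ β₀ = β₀ ∧ ∀ β : Vec p, P *ᵥ β = β → β ≠ β₀ → f β < f β₀

/-- The matrices `P j` are the orthogonal projection matrices of a family of pairwise
orthogonal nonzero linear subspaces of `ℝ^p` whose direct sum is `ℝ^p`. -/
structure OrthPartition (p q : ℕ) (P : Fin q → Mat p) : Prop where
  symm : ∀ j, (P j)ᵀ = P j
  idem : ∀ j, P j * P j = P j
  nonzero : ∀ j, P j ≠ 0
  orth : ∀ i j, i ≠ j → P i * P j = 0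
  sum_one : ∑ j, P j = 1

lemma dot_symm {p : ℕ} (C : Mat p) (hC : Cᵀ = C) (v w : Vec p) :
    v ⬝ᵥ (C *ᵥ w) = w ⬝ᵥ (C *ᵥ v) := by
  rw [Matrix.dotProduct_mulVec, ← Matrix.mulVec_transpose, hC, dotProduct_comm]

lemma umax_unique {p : ℕ} {f : Vec p → ℝ} {P : Mat p} {a b : Vec p}
    (ha : IsUMaxOn f P a) (hb : IsUMaxOn f P b) : a = b := by
  by_contra h
  have h1 := ha.2 b hb.1 (fun hh => h hh.symm)
  have h2 := hb.2 a ha.1 h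
  linarith

lemma umax_proj {p : ℕ} (C : Mat p) (hC : C.PosDef) (P : Mat p)
    (hsymm : Pᵀ = P) (hidem : P * P = P) (hcp : C * P = P * C * P) (γ : Vec p) :
    IsUMaxOn (dVar C γ) P (P *ᵥ γ) := by
  have hCsymm : Cᵀ = C := by simpa [Matrix.IsHermitian] using hC.1
  set g : Vec p := P *ᵥ γ with hg
  have hPg : P *ᵥ g = g := by rw [hg, Matrix.mulVec_mulVec, hidem]
  refine ⟨hPg, fun β hβ hne => ?_⟩
  -- C *ᵥ v = P *ᵥ (C *ᵥ v) for v in the subspace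
  have hfix : ∀ v : Vec p, P *ᵥ v = v → C *ᵥ v = P *ᵥ (C *ᵥ v) := by
    intro v hv
    conv_lhs => rw [← hv, Matrix.mulVec_mulVec, hcp]
    rw [← Matrix.mulVec_mulVec, ← Matrix.mulVec_mulVec, hv]
  have hdotγ : ∀ v : Vec p, P *ᵥ v = v → γ ⬝ᵥ (C *ᵥ v) = g ⬝ᵥ (C *ᵥ v) := by
    intro v hv
    rw [hfix v hv, Matrix.dotProduct_mulVec, ← Matrix.mulVec_transpose, hsymm, ← hg]
    conv_rhs => rw [Matrix.dotProduct_mulVec, ← Matrix.mulVec_transpose, hsymm, hPg]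
  have hdβ : dVar C γ β = dVar C g β := by rw [dVar, dVar, hdotγ β hβ]
  have hdg : dVar C γ g = dVar C g g := by rw [dVar, dVar, hdotγ g hPg]
  have hsub : β - g ≠ 0 := sub_ne_zero.mpr hne
  have hpos : 0 < (β - g) ⬝ᵥ (C *ᵥ (β - g)) := by
    have := hC.dotProduct_mulVec_pos hsub
    simpa using this
  have hkey : dVar C g g - dVar C g β = (β - g) ⬝ᵥ (C *ᵥ (β - g)) := by
    have hs : g ⬝ᵥ (C *ᵥ β) = β ⬝ᵥ (C *ᵥ g) := dot_symm C hCsymm g β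
    simp only [dVar, Matrix.mulVec_sub, sub_dotProduct, dotProduct_sub]
    ring_nf
    linarith [hs]
  rw [hdβ, hdg]
  linarith

theorem stmt2 {p n : ℕ} (hp : 1 ≤ p) (hn : 1 ≤ n)
    (Cov : ℕ → Mat p) (hCov : ∀ t, 1 ≤ t → (Cov t).PosDef)
    (γ : ℕ → Vec p)
    (Pinv Pres : Mat p)
    (hsymm₁ : Pinvᵀ = Pinv) (hidem₁ : Pinv * Pinv = Pinv)
    (hsymm₂ : Presᵀ = Pres) (hidem₂ : Pres * Pres = Pres)
    (horth : Pinv * Pres = 0)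
    (hsum : Pinv + Pres = 1)
    (hdec : ∀ t, 1 ≤ t → Pinv * Cov t * Pres = 0)
    (hoptinv : ∃ β₀ : Vec p, ∀ t, 1 ≤ t → IsUMaxOn (dVar (Cov t) (γ t)) Pinv β₀) :
    ∀ t, 1 ≤ t →
      ∀ βinv δ : Vec p,
        IsUMaxOn (fun β => (n : ℝ)⁻¹ * ∑ s ∈ Finset.Icc 1 n, dVar (Cov s) (γ s) β)
          Pinv βinv →
        IsUMaxOn (dVar (Cov t) (γ t)) Pres δ →
        γ t = βinv + δ := by
  intro t ht βinv δ hβinv hδ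
  have hCsymm : ∀ s, 1 ≤ s → (Cov s)ᵀ = Cov s := fun s hs => by
    simpa [Matrix.IsHermitian] using (hCov s hs).1
  -- Pres * Cov s * Pinv = 0
  have hdec' : ∀ s, 1 ≤ s → Pres * Cov s * Pinv = 0 := by
    intro s hs
    have := congrArg Matrix.transpose (hdec s hs)
    simpa [Matrix.transpose_mul, hsymm₁, hsymm₂, hCsymm s hs, Matrix.mul_assoc] using this
  -- Cov s * Pinv = Pinv * Cov s * Pinv
  have hcpinv : ∀ s, 1 ≤ s → Cov s * Pinv = Pinv * Cov s * Pinv := by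
    intro s hs
    have h1 : (Pinv + Pres) * Cov s * Pinv = Cov s * Pinv := by rw [hsum, Matrix.one_mul]
    calc Cov s * Pinv = (Pinv + Pres) * Cov s * Pinv := h1.symm
      _ = Pinv * Cov s * Pinv + Pres * Cov s * Pinv := by rw [Matrix.add_mul, Matrix.add_mul]
      _ = Pinv * Cov s * Pinv := by rw [hdec' s hs, add_zero]
  have hcpres : ∀ s, 1 ≤ s → Cov s * Pres = Pres * Cov s * Pres := by
    intro s hs
    have h1 : (Pinv + Pres) * Cov s * Pres = Cov s * Pres := by rw [hsum, Matrix.one_mul]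
    calc Cov s * Pres = (Pinv + Pres) * Cov s * Pres := h1.symm
      _ = Pinv * Cov s * Pres + Pres * Cov s * Pres := by rw [Matrix.add_mul, Matrix.add_mul]
      _ = Pres * Cov s * Pres := by rw [hdec s hs, zero_add]
  -- for each s ≥ 1, Pinv *ᵥ γ s is the unique maximizer over Pinv
  have hmaxinv : ∀ s, 1 ≤ s → IsUMaxOn (dVar (Cov s) (γ s)) Pinv (Pinv *ᵥ γ s) :=
    fun s hs => umax_proj (Cov s) (hCov s hs) Pinv hsymm₁ hidem₁ (hcpinv s hs) (γ s)
  have hmaxres : IsUMaxOn (dVar (Cov t) (γ t)) Pres (Pres *ᵥ γ t) :=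
    umax_proj (Cov t) (hCov t ht) Pres hsymm₂ hidem₂ (hcpres t ht) (γ t)
  obtain ⟨β₀, hβ₀⟩ := hoptinv
  have hconst : ∀ s, 1 ≤ s → Pinv *ᵥ γ s = β₀ :=
    fun s hs => umax_unique (hmaxinv s hs) (hβ₀ s hs)
  -- β₀ maximizes the average
  have havg : IsUMaxOn (fun β => (n : ℝ)⁻¹ * ∑ s ∈ Finset.Icc 1 n, dVar (Cov s) (γ s) β)
      Pinv β₀ := by
    constructor
    · rw [← hconst t ht, Matrix.mulVec_mulVec, hidem₁]
    · intro β hβ hne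
      have hstrict : ∀ s ∈ Finset.Icc 1 n, dVar (Cov s) (γ s) β < dVar (Cov s) (γ s) β₀ := by
        intro s hs
        have hs1 : 1 ≤ s := (Finset.mem_Icc.mp hs).1
        have := (hβ₀ s hs1).2 β hβ hne
        exact this
      have hsum_lt : ∑ s ∈ Finset.Icc 1 n, dVar (Cov s) (γ s) β
          < ∑ s ∈ Finset.Icc 1 n, dVar (Cov s) (γ s) β₀ := by
        apply Finset.sum_lt_sum_of_nonempty
        · exact ⟨1, Finset.mem_Icc.mpr ⟨le_refl 1, hn⟩⟩
        · exact hstrict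
      have hninv : (0:ℝ) < (n : ℝ)⁻¹ := by positivity
      exact mul_lt_mul_of_pos_left hsum_lt hninv
  have h1 : βinv = β₀ := umax_unique hβinv havg
  have h2 : δ = Pres *ᵥ γ t := umax_unique hδ hmaxres
  have h3 : βinv = Pinv *ᵥ γ t := by rw [h1, hconst t ht]
  have : (Pinv + Pres) *ᵥ γ t = γ t := by rw [hsum, Matrix.one_mulVec]
  rw [h3, h2, ← Matrix.add_mulVec, this]
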